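/- For every β ∈ [1,2), G(β) ≥ −log₂(5/4). (Consequently q(n) ≤ 1.25^{n+o(n)} for all n.) -/

import Mathlib

/-- The binary entropy function, `h(p) = p log₂(1/p) + (1-p) log₂(1/(1-p))`,
with the convention `h(0) = h(1) = 0` (automatic since `1/0 = 0` and `logb 2 0 = 0`). -/
noncomputable def binH (p : ℝ) : ℝ :=
  p * Real.logb 2 (1 / p) + (1 - p) * Real.logb 2 (1 / (1 - p))

/-- `(c, b) ∈ C(β)`: `c : ℕ → [0,1]`, `∑ cᵢ/2ⁱ = 1/(β·2ᵇ)` and `∑ cᵢ ≤ 1`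
(the latter expressed via partial sums, which is equivalent for nonnegative terms). -/
def memC (β : ℝ) (c : ℕ → ℝ) (b : ℕ) : Prop :=
  (∀ i, c i ∈ Set.Icc (0 : ℝ) 1) ∧
  (∑' i : ℕ, c i / 2 ^ i) = 1 / (β * 2 ^ b) ∧
  ∀ n : ℕ, (∑ i ∈ Finset.range n, c i) ≤ 1

/-- `α ∈ A(c,b)`: `α : ℕ → [0,1]` with `∑ αᵢ cᵢ / 2ⁱ = 1/(β·2^{b+1})`. -/
def memA (β : ℝ) (b : ℕ) (c α : ℕ → ℝ) : Prop :=
  (∀ i, α i ∈ Set.Icc (0 : ℝ) 1) ∧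
  (∑' i : ℕ, α i * c i / 2 ^ i) = 1 / (β * 2 ^ (b + 1))

/-- `P(c,α) = ∑ h(αᵢ)·cᵢ − h(∑ αᵢ·cᵢ)`. -/
noncomputable def Pfun (c α : ℕ → ℝ) : ℝ :=
  (∑' i : ℕ, binH (α i) * c i) - binH (∑' i : ℕ, α i * c i)

/-- `sup_{α ∈ A(c,b)} P(c,α)`. -/
noncomputable def supP (β : ℝ) (b : ℕ) (c : ℕ → ℝ) : ℝ :=
  sSup {y | ∃ α, memA β b c α ∧ y = Pfun c α}

/-- `G(β) = inf_{(c,b) ∈ C(β)} sup_{α ∈ A(c,b)} P(c,α)`. -/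
noncomputable def Gfun (β : ℝ) : ℝ :=
  sInf {y | ∃ c b, memC β c b ∧ y = supP β b c}

lemma logb54_nonneg : 0 ≤ Real.logb 2 (5 / 4) :=
  Real.logb_nonneg (by norm_num) (by norm_num)

/-- Key inequality: `h(p) ≤ 2p + log₂(5/4)` for `p ∈ [0,1]`. -/
lemma binH_le (p : ℝ) (hp0 : 0 ≤ p) (hp1 : p ≤ 1) :
    binH p ≤ 2 * p + Real.logb 2 (5 / 4) := by
  rcases eq_or_lt_of_le hp0 with h0 | h0
  · simp [binH, ← h0]
    have := logb54_nonneg; linarith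
  rcases eq_or_lt_of_le hp1 with h1 | h1
  · simp [binH, h1]
    have := logb54_nonneg; linarith
  have hq : 0 < 1 - p := by linarith
  have hlog2 : (0:ℝ) < Real.log 2 := Real.log_pos (by norm_num)
  have hA' : Real.log (1 / (5 * p)) ≤ 1 / (5 * p) - 1 :=
    Real.log_le_sub_one_of_pos (by positivity)
  have hA : p * Real.log (1 / (5 * p)) ≤ 1 / 5 - p := by
    have := mul_le_mul_of_nonneg_left hA' hp0
    have hp' : p * (1 / (5 * p)) = 1 / 5 := by field_simp
    nlinarith
  have hB' : Real.log (4 / (5 * (1 - p))) ≤ 4 / (5 * (1 - p)) - 1 :=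
    Real.log_le_sub_one_of_pos (by positivity)
  have hB : (1 - p) * Real.log (4 / (5 * (1 - p))) ≤ p - 1 / 5 := by
    have := mul_le_mul_of_nonneg_left hB' (le_of_lt hq)
    have hq' : (1 - p) * (4 / (5 * (1 - p))) = 4 / 5 := by field_simp
    nlinarith
  have e1 : Real.log (1 / p) = Real.log (1 / (5 * p)) + Real.log 5 := by
    rw [← Real.log_mul (by positivity) (by norm_num)]
    congr 1; field_simp
  have e2 : Real.log (1 / (1 - p)) =
      Real.log (4 / (5 * (1 - p))) + (Real.log 5 - 2 * Real.log 2) := by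
    have h4 : Real.log 4 = 2 * Real.log 2 := by
      rw [show (4:ℝ) = 2 ^ 2 by norm_num, Real.log_pow]; push_cast; ring
    rw [← h4, ← Real.log_div (by norm_num) (by norm_num),
      ← Real.log_mul (by positivity) (by positivity)]
    congr 1; field_simp
  have e54 : Real.log (5 / 4) = Real.log 5 - 2 * Real.log 2 := by
    have h4 : Real.log 4 = 2 * Real.log 2 := by
      rw [show (4:ℝ) = 2 ^ 2 by norm_num, Real.log_pow]; push_cast; ring
    rw [Real.log_div (by norm_num) (by norm_num), h4]
  have key : p * Real.log (1 / p) + (1 - p) * Real.log (1 / (1 - p)) ≤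
      2 * p * Real.log 2 + Real.log (5 / 4) := by
    rw [e1, e2, e54]; nlinarith
  have hbinH : binH p = (p * Real.log (1 / p) + (1 - p) * Real.log (1 / (1 - p))) /
      Real.log 2 := by
    simp [binH, Real.logb]; ring
  have hrhs : 2 * p + Real.logb 2 (5 / 4) =
      (2 * p * Real.log 2 + Real.log (5 / 4)) / Real.log 2 := by
    simp [Real.logb]; field_simp
  rw [hbinH, hrhs]
  gcongr

lemma binH_half : binH (1 / 2) = 1 := by
  norm_num [binH, Real.logb_self_eq_one]

/-- `G(β) ≥ −log₂(5/4)` for every `β ∈ [1,2)`. -/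
theorem G_ge_neg_log_five_fourths (β : ℝ) (hβ : β ∈ Set.Ico (1 : ℝ) 2) :
    -(Real.logb 2 (5 / 4)) ≤ Gfun β := by
  obtain ⟨hβ1, hβ2⟩ := hβ
  have hβ0 : β ≠ 0 := by linarith
  have hneg : -(Real.logb 2 (5 / 4)) ≤ 0 := by have := logb54_nonneg; linarith
  unfold Gfun
  rcases Set.eq_empty_or_nonempty {y | ∃ c b, memC β c b ∧ y = supP β b c} with he | hne
  · rw [he, Real.sInf_empty]; exact hneg
  apply le_csInf hne
  rintro y ⟨c, b, ⟨hc01, hcsum, hcle⟩, rfl⟩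
  -- c is summable with sum S ∈ [0,1]
  have hcnn : ∀ i, 0 ≤ c i := fun i => (hc01 i).1
  have hcsummable : Summable c := summable_of_sum_range_le hcnn hcle
  set S : ℝ := ∑' i, c i with hS
  have hS0 : 0 ≤ S := tsum_nonneg hcnn
  have hS1 : S ≤ 1 := Summable.tsum_le_of_sum_range_le hcsummable hcle
  -- the witness α ≡ 1/2
  let α : ℕ → ℝ := fun _ => (1 : ℝ) / 2
  have hmemA : memA β b c α := by
    refine ⟨fun i => ⟨by norm_num, by norm_num⟩, ?_⟩
    have h1 : (∑' i : ℕ, α i * c i / 2 ^ i) = (1/2) * ∑' i : ℕ, c i / 2 ^ i := by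
      rw [← tsum_mul_left]
      exact tsum_congr fun i => by show (1:ℝ)/2 * c i / 2^i = 1/2 * (c i / 2^i); ring
    rw [h1, hcsum, pow_succ]
    rw [div_mul_eq_div_div, ← div_div]
    ring_nf
  have hαc : (∑' i : ℕ, α i * c i) = S / 2 := by
    have h1 : (∑' i : ℕ, α i * c i) = (1/2) * ∑' i : ℕ, c i := by
      rw [← tsum_mul_left]
    rw [h1, ← hS]; ring
  have hhαc : (∑' i : ℕ, binH (α i) * c i) = S := by
    have h1 : (∑' i : ℕ, binH (α i) * c i) = ∑' i : ℕ, c i := by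
      exact tsum_congr fun i => by show binH (1/2) * c i = c i; rw [binH_half]; ring
    rw [h1, ← hS]
  have hP : Pfun c α = S - binH (S / 2) := by
    rw [Pfun, hαc, hhαc]
  have hPge : -(Real.logb 2 (5 / 4)) ≤ Pfun c α := by
    rw [hP]
    have := binH_le (S / 2) (by linarith) (by linarith)
    linarith
  -- now bound the sSup
  unfold supP
  have hmem : Pfun c α ∈ {y | ∃ α', memA β b c α' ∧ y = Pfun c α'} :=
    ⟨α, hmemA, rfl⟩
  rcases isEmpty_or_nonempty Unit with h | _
  · exact absurd trivial (by simp at h)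
  by_cases hbdd : BddAbove {y | ∃ α', memA β b c α' ∧ y = Pfun c α'}
  · exact hPge.trans (le_csSup hbdd hmem)
  · rw [Real.sSup_of_not_bddAbove hbdd]; exact hneg
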